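/- Let a > 0 and suppose Φ : J → ℝ is n-times continuously differentiable on an interval J of length δ > 0, with |Φ(t)| ≥ c > 0 for all t ∈ J and |Φ^{(j)}(t)| ≤ K·c·δ^{−j} for all t ∈ J and 1 ≤ j ≤ n, for some constant K ≥ 1. Then there exists a constant C = C(n, K) such that |(1/Φ)^{(n)}(t)| ≤ C·c^{−1}·δ^{−n} for all t ∈ J. -/

import Mathlib

theorem reciprocal_iterated_deriv_bound (n : ℕ) (K : ℝ) (hK : 1 ≤ K) :
    ∃ C > 0, ∀ (Φ : ℝ → ℝ) (α β δ c : ℝ), 0 < δ → β - α = δ → 0 < c →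
      ContDiff ℝ n Φ →
      (∀ t ∈ Set.Icc α β, c ≤ |Φ t|) →
      (∀ t ∈ Set.Icc α β, ∀ j : ℕ, 1 ≤ j → j ≤ n →
        |iteratedDeriv j Φ t| ≤ K * c * δ ^ (-(j : ℤ))) →
      ∀ t ∈ Set.Icc α β,
        |iteratedDeriv n (fun s => (Φ s)⁻¹) t| ≤ C * c⁻¹ * δ ^ (-(n : ℤ)) := by
  have hK0 : (0 : ℝ) < K := lt_of_lt_of_le one_pos hK
  refine ⟨(n.factorial : ℝ) * n.factorial * K ^ n, by positivity, ?_⟩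
  intro Φ α β δ c hδ hβα hc hΦ hlow hup t ht
  -- The open set where Φ does not vanish
  set U : Set ℝ := Φ ⁻¹' {0}ᶜ with hU
  have hUopen : IsOpen U := (isOpen_compl_singleton).preimage hΦ.continuous
  have hIccU : Set.Icc α β ⊆ U := by
    intro x hx
    have h1 : c ≤ |Φ x| := hlow x hx
    simp only [hU, Set.mem_preimage, Set.mem_compl_iff, Set.mem_singleton_iff]
    intro h
    rw [h] at h1
    simp only [abs_zero] at h1
    linarith
  have htU : t ∈ U := hIccU ht
  have hΦt : Φ t ≠ 0 := htU
  -- the normalized function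
  set Ψ : ℝ → ℝ := fun x => c⁻¹ * Φ x with hΨdef
  have hΨ : ContDiff ℝ n Ψ := contDiff_const.mul hΦ
  have hΨt1 : (1 : ℝ) ≤ |Ψ t| := by
    have : c ≤ |Φ t| := hlow t ht
    rw [hΨdef]
    simp only [abs_mul, abs_inv, abs_of_pos hc]
    calc (1 : ℝ) = c⁻¹ * c := (inv_mul_cancel₀ hc.ne').symm
    _ ≤ c⁻¹ * |Φ t| := mul_le_mul_of_nonneg_left this (by positivity)
  -- the formula for iterated derivatives of inv
  have hinv_formula : ∀ (i : ℕ) (y : ℝ),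
      iteratedDeriv i (fun x : ℝ => x⁻¹) y
        = ((∏ j ∈ Finset.range i, ((-1 : ℤ) - j) : ℤ) : ℝ) * y ^ ((-1 : ℤ) - i) := by
    intro i y
    have : (fun x : ℝ => x⁻¹) = fun x : ℝ => x ^ (-1 : ℤ) := by
      funext x; simp
    rw [this, iteratedDeriv_eq_iterate]
    simpa using iter_deriv_zpow (-1 : ℤ) y i
  have hinv_bound : ∀ (i : ℕ) (y : ℝ), 1 ≤ |y| → i ≤ n →
      |iteratedDeriv i (fun x : ℝ => x⁻¹) y| ≤ (n.factorial : ℝ) := by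
    intro i y hy hin
    rw [hinv_formula i y, abs_mul]
    have hP : (∏ j ∈ Finset.range i, ((-1 : ℤ) - j)) = (-1) ^ i * i.factorial := by
      induction i with
      | zero => simp
      | succ m ih =>
        rw [Finset.prod_range_succ, ih (by omega)]
        push_cast [Nat.factorial_succ]
        ring
    have h1 : |((∏ j ∈ Finset.range i, ((-1 : ℤ) - j) : ℤ) : ℝ)| = (i.factorial : ℝ) := by
      rw [hP]
      push_cast
      rw [abs_mul, abs_pow, abs_neg, abs_one, one_pow, one_mul,
        abs_of_nonneg (by positivity : (0:ℝ) ≤ (i.factorial : ℝ))]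
    have h2 : |y ^ ((-1 : ℤ) - i)| ≤ 1 := by
      have hm : ((-1 : ℤ) - i) = -(((i + 1 : ℕ) : ℤ)) := by push_cast; ring
      rw [hm, zpow_neg, zpow_natCast, abs_inv, abs_pow]
      exact inv_le_one_of_one_le₀ (one_le_pow₀ hy)
    calc |((∏ j ∈ Finset.range i, ((-1 : ℤ) - j) : ℤ) : ℝ)| * |y ^ ((-1 : ℤ) - i)|
        ≤ (i.factorial : ℝ) * 1 := by
          rw [h1]; exact mul_le_mul_of_nonneg_left h2 (by positivity)
      _ ≤ (n.factorial : ℝ) := by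
          rw [mul_one]
          exact_mod_cast Nat.factorial_le hin
  -- conversion between within-open-set derivatives and global ones
  have hwithin : ∀ (i : ℕ) (f : ℝ → ℝ) (s : Set ℝ), IsOpen s → ∀ x ∈ s,
      iteratedDerivWithin i f s x = iteratedDeriv i f x := by
    intro i f s hs x hx
    rw [iteratedDerivWithin, iteratedDeriv, iteratedFDerivWithin_of_isOpen i hs hx]
  -- Apply the composition bound
  have hmaps : Set.MapsTo Ψ U ({0}ᶜ : Set ℝ) := by
    intro x hx
    simp only [Set.mem_compl_iff, Set.mem_singleton_iff, hΨdef]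
    have hx0 : Φ x ≠ 0 := hx
    positivity
  have hC : ∀ i, i ≤ n →
      ‖iteratedFDerivWithin ℝ i (Inv.inv : ℝ → ℝ) ({0}ᶜ : Set ℝ) (Ψ t)‖ ≤ (n.factorial : ℝ) := by
    intro i hin
    rw [norm_iteratedFDerivWithin_eq_norm_iteratedDerivWithin,
      hwithin i _ _ isOpen_compl_singleton _ (hmaps htU), Real.norm_eq_abs]
    exact hinv_bound i (Ψ t) hΨt1 hin
  have hD : ∀ i, 1 ≤ i → i ≤ n →
      ‖iteratedFDerivWithin ℝ i Ψ U t‖ ≤ (K / δ) ^ i := by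
    intro i h1i hin
    rw [norm_iteratedFDerivWithin_eq_norm_iteratedDerivWithin,
      hwithin i _ _ hUopen _ htU, Real.norm_eq_abs]
    have hΦi : ContDiff ℝ i Φ := hΦ.of_le (by exact_mod_cast hin)
    have : iteratedDeriv i Ψ t = c⁻¹ * iteratedDeriv i Φ t := by
      rw [← iteratedDerivWithin_univ, ← iteratedDerivWithin_univ (f := Φ)]
      exact iteratedDerivWithin_const_mul (Set.mem_univ t) uniqueDiffOn_univ c⁻¹
        hΦi.contDiffWithinAt
    rw [this, abs_mul, abs_inv, abs_of_pos hc]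
    have hup' := hup t ht i h1i hin
    calc c⁻¹ * |iteratedDeriv i Φ t| ≤ c⁻¹ * (K * c * δ ^ (-(i : ℤ))) := by
          apply mul_le_mul_of_nonneg_left hup' (by positivity)
      _ = K * δ ^ (-(i : ℤ)) := by field_simp
      _ ≤ K ^ i * δ ^ (-(i : ℤ)) := by
          have : (0:ℝ) < δ ^ (-(i : ℤ)) := by positivity
          apply mul_le_mul_of_nonneg_right (le_self_pow₀ hK (by omega)) (le_of_lt this)
      _ = (K / δ) ^ i := by
          rw [div_pow, zpow_neg, zpow_natCast]
          ring
  have key := norm_iteratedFDerivWithin_comp_le (𝕜 := ℝ) (g := (Inv.inv : ℝ → ℝ))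
    (f := Ψ) (n := n) (s := U) (t := ({0}ᶜ : Set ℝ)) (N := (n : WithTop ℕ∞))
    (contDiffOn_inv ℝ) hΨ.contDiffOn le_rfl
    isOpen_compl_singleton.uniqueDiffOn hUopen.uniqueDiffOn hmaps htU hC hD
  -- identify the composition
  have hcomp : (Inv.inv : ℝ → ℝ) ∘ Ψ = fun s => c * (Φ s)⁻¹ := by
    funext x
    simp only [Function.comp_apply, hΨdef, mul_inv, inv_inv]
  have hg : ContDiffOn ℝ n (fun s => (Φ s)⁻¹) U := by
    apply hΦ.contDiffOn.inv
    intro x hx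
    exact hx
  have heq : ‖iteratedFDerivWithin ℝ n ((Inv.inv : ℝ → ℝ) ∘ Ψ) U t‖
      = c * |iteratedDeriv n (fun s => (Φ s)⁻¹) t| := by
    rw [norm_iteratedFDerivWithin_eq_norm_iteratedDerivWithin, hcomp, Real.norm_eq_abs]
    have : iteratedDerivWithin n (fun s => c * (Φ s)⁻¹) U t
        = c * iteratedDerivWithin n (fun s => (Φ s)⁻¹) U t :=
      iteratedDerivWithin_const_mul htU hUopen.uniqueDiffOn c (hg t htU)
    rw [this, hwithin n _ _ hUopen _ htU, abs_mul, abs_of_pos hc]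
  rw [heq] at key
  have hfinal : |iteratedDeriv n (fun s => (Φ s)⁻¹) t|
      ≤ ((n.factorial : ℝ) * (n.factorial : ℝ) * (K / δ) ^ n) / c :=
    (le_div_iff₀' hc).2 key
  calc |iteratedDeriv n (fun s => (Φ s)⁻¹) t|
      ≤ ((n.factorial : ℝ) * (n.factorial : ℝ) * (K / δ) ^ n) / c := hfinal
    _ = (n.factorial : ℝ) * n.factorial * K ^ n * c⁻¹ * δ ^ (-(n : ℤ)) := by
        rw [zpow_neg, zpow_natCast, div_pow]
        field_simp
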